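/- Let φ₀, φ₁ be real numbers with 0 ≤ φ₀ < φ₁ ≤ π. Then p(θ) > 0 for every θ ≥ 0. -/

import Mathlib

open Real

/-- `p φ₀ δ θ = ∫_θ^{θ+δ} sin(u + φ₀ - θ)/√u du` -/
noncomputable def p (φ₀ δ θ : ℝ) : ℝ := ∫ u in θ..(θ + δ), Real.sin (u + φ₀ - θ) / Real.sqrt u

theorem stmt6 (φ₀ φ₁ : ℝ) (h0 : 0 ≤ φ₀) (h1 : φ₀ < φ₁) (h2 : φ₁ ≤ π) :
    ∀ θ : ℝ, 0 ≤ θ → 0 < p φ₀ (φ₁ - φ₀) θ := by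
  intro θ hθ
  have hlt : θ < θ + (φ₁ - φ₀) := by linarith
  have hint : IntervalIntegrable (fun u => Real.sin (u + φ₀ - θ) / Real.sqrt u)
      MeasureTheory.volume θ (θ + (φ₁ - φ₀)) := by
    have h1' : IntervalIntegrable (fun u : ℝ => u ^ (-(1:ℝ)/2))
        MeasureTheory.volume θ (θ + (φ₁ - φ₀)) := by
      apply intervalIntegral.intervalIntegrable_rpow'
      norm_num
    have h2' := h1'.continuousOn_mul (g := fun u => Real.sin (u + φ₀ - θ))
      ((Real.continuous_sin.comp (by continuity)).continuousOn)
    apply h2'.congr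
    · intro x hx; dsimp only
      have hx0 : 0 < x := lt_of_le_of_lt (by simpa [hlt.le] using hθ)
        ((Set.uIoc_of_le hlt.le ▸ hx).1)
      rw [Real.sqrt_eq_rpow, eq_div_iff (by positivity), mul_assoc, ← Real.rpow_add hx0]
      norm_num
  apply intervalIntegral.intervalIntegral_pos_of_pos_on hint _ hlt
  intro x hx
  have hx0 : 0 < x := lt_of_le_of_lt hθ hx.1
  apply div_pos _ (Real.sqrt_pos.mpr hx0)
  apply Real.sin_pos_of_pos_of_lt_pi <;> cases hx <;> nlinarith
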